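/- The function f(t) = t(t+2)^3(2t+1)^3 / ((t^2+t+1)^2(t^2+7t+1)^2) is strictly monotonically increasing on the interval [t_3, 1], where t_3 = (11 + 9√2 - 3√(31 + 22√2))/2. -/

import Mathlib

noncomputable def t3 : ℝ := (11 + 9 * Real.sqrt 2 - 3 * Real.sqrt (31 + 22 * Real.sqrt 2)) / 2

noncomputable def f (t : ℝ) : ℝ :=
  t * (t + 2) ^ 3 * (2 * t + 1) ^ 3 / ((t ^ 2 + t + 1) ^ 2 * (t ^ 2 + 7 * t + 1) ^ 2)

lemma t3_pos : 0 < t3 := by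
  have hs2 : Real.sqrt 2 ^ 2 = 2 := Real.sq_sqrt (by norm_num)
  have hs2nn : 0 ≤ Real.sqrt 2 := Real.sqrt_nonneg 2
  have h : Real.sqrt (31 + 22 * Real.sqrt 2) < (11 + 9 * Real.sqrt 2) / 3 := by
    rw [show (11 + 9 * Real.sqrt 2) / 3 = (11 + 9 * Real.sqrt 2) / 3 from rfl]
    rw [show Real.sqrt (31 + 22 * Real.sqrt 2) < (11 + 9 * Real.sqrt 2) / 3 ↔
      31 + 22 * Real.sqrt 2 < ((11 + 9 * Real.sqrt 2) / 3) ^ 2 from Real.sqrt_lt' (by positivity)]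
    nlinarith [hs2]
  unfold t3
  nlinarith [h]

lemma hasDerivAt_f (t : ℝ) (h2 : t ^ 2 + 7 * t + 1 ≠ 0) :
    HasDerivAt f
      (-2 * (t - 1) * (t + 1) * (t + 2) ^ 2 * (2 * t + 1) ^ 2 *
        (t ^ 4 + 2 * t ^ 3 + 21 * t ^ 2 + 2 * t + 1) /
        ((t ^ 2 + t + 1) ^ 3 * (t ^ 2 + 7 * t + 1) ^ 3)) t := by
  have h1 : t ^ 2 + t + 1 ≠ 0 := by nlinarith [sq_nonneg (t + 1/2)]
  have hN : HasDerivAt (fun t : ℝ => t * (t + 2) ^ 3 * (2 * t + 1) ^ 3)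
      ((1 * (t + 2) ^ 3 + t * (3 * (t + 2) ^ 2 * 1)) * (2 * t + 1) ^ 3 +
        t * (t + 2) ^ 3 * (3 * (2 * t + 1) ^ 2 * (2 * 1))) t := by
    exact ((hasDerivAt_id t).mul (((hasDerivAt_id t).add_const 2).pow 3)).mul
      ((((hasDerivAt_id t).const_mul 2).add_const 1).pow 3)
  have hD : HasDerivAt (fun t : ℝ => (t ^ 2 + t + 1) ^ 2 * (t ^ 2 + 7 * t + 1) ^ 2)
      ((2 * (t ^ 2 + t + 1) ^ 1 * (2 * t + 1)) * (t ^ 2 + 7 * t + 1) ^ 2 +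
        (t ^ 2 + t + 1) ^ 2 * (2 * (t ^ 2 + 7 * t + 1) ^ 1 * (2 * t + 7))) t := by
    have hA : HasDerivAt (fun t : ℝ => t ^ 2 + t + 1) (2 * t + 1) t := by
      have := ((hasDerivAt_pow 2 t).add (hasDerivAt_id t)).add_const 1
      simpa using this
    have hB : HasDerivAt (fun t : ℝ => t ^ 2 + 7 * t + 1) (2 * t + 7) t := by
      have := ((hasDerivAt_pow 2 t).add ((hasDerivAt_id t).const_mul 7)).add_const 1
      refine this.congr_deriv ?_; norm_num
    exact (hA.pow 2).mul (hB.pow 2)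
  have hD0 : (t ^ 2 + t + 1) ^ 2 * (t ^ 2 + 7 * t + 1) ^ 2 ≠ 0 := by positivity
  have := hN.div hD hD0
  refine this.congr_deriv ?_
  field_simp
  ring

theorem f_strictMonoOn : StrictMonoOn f (Set.Icc t3 1) := by
  have ht3 := t3_pos
  apply strictMonoOn_of_deriv_pos (convex_Icc _ _)
  · unfold f
    apply ContinuousOn.div (by fun_prop) (by fun_prop)
    intro x hx
    have hx0 : 0 < x := lt_of_lt_of_le ht3 hx.1
    have : 0 < x ^ 2 + 7 * x + 1 := by nlinarith
    positivity
  · intro x hx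
    rw [interior_Icc] at hx
    have hx0 : 0 < x := lt_of_lt_of_le ht3 hx.1.le
    have hx1 : x < 1 := hx.2
    have hB : 0 < x ^ 2 + 7 * x + 1 := by nlinarith
    have hA : 0 < x ^ 2 + x + 1 := by nlinarith
    rw [(hasDerivAt_f x hB.ne').deriv]
    apply div_pos
    · have hq : 0 < x ^ 4 + 2 * x ^ 3 + 21 * x ^ 2 + 2 * x + 1 := by positivity
      have h1 : 0 < -2 * (x - 1) := by linarith
      have h2 : 0 < x + 1 := by linarith
      have h3 : 0 < (x + 2) ^ 2 := by positivity
      have h4 : 0 < (2 * x + 1) ^ 2 := by positivity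
      positivity
    · positivity
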